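/- The type B odd Demazure operator is a square-zero operator: (∂_n^b)^2 = 0 on Pol_n^-. -/
import Mathlib


/-- The type B odd Demazure operator is square-zero on `Pol_n^-`. -/
theorem stmt_1 (n : ℕ) (R : Type*) [Ring R] (x : Fin (n + 1) → R)
    (hx : ∀ i j, i ≠ j → x i * x j + x j * x i = 0)
    (hgen : Subring.closure (Set.range x) = ⊤)
    (s : R →+* R) (hs : ∀ j, s (x j) = - x j)
    (D : R →ₗ[ℤ] R) (hD1 : D 1 = 0)
    (hDn : D (x (Fin.last n)) = 1)
    (hDj : ∀ j, j ≠ Fin.last n → D (x j) = 0)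
    (hL : ∀ f g, D (f * g) = D f * g + s f * D g) :
    ∀ f : R, D (D f) = 0 := by
  have hmem : ∀ f : R, f ∈ Subring.closure (Set.range x) := by
    intro f; rw [hgen]; trivial
  -- s ∘ s = id
  have hss : ∀ f : R, s (s f) = f := by
    intro f
    refine Subring.closure_induction (p := fun f _ => s (s f) = f) ?_ ?_ ?_ ?_ ?_ ?_ (hmem f)
    · rintro _ ⟨j, rfl⟩; rw [hs j]; simp [hs j]
    · simp
    · simp
    · intro a b _ _ ha hb; simp [ha, hb]
    · intro a _ ha; simp [ha]
    · intro a b _ _ ha hb; simp [ha, hb]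
  -- D ∘ s = - s ∘ D
  have hDs : ∀ f : R, D (s f) = - s (D f) := by
    intro f
    refine Subring.closure_induction (p := fun f _ => D (s f) = - s (D f)) ?_ ?_ ?_ ?_ ?_ ?_ (hmem f)
    · rintro _ ⟨j, rfl⟩
      rw [hs j]
      by_cases h : j = Fin.last n
      · subst h; simp [hDn]
      · simp [hDj j h]
    · simp
    · simp [hD1]
    · intro a b _ _ ha hb; simp [map_add, ha, hb, add_comm]
    · intro a _ ha; simp [map_neg, ha]
    · intro a b _ _ ha hb
      rw [map_mul, hL, hL, ha, hb, map_add, map_mul, map_mul, hss]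
      noncomm_ring
  intro f
  refine Subring.closure_induction (p := fun f _ => D (D f) = 0) ?_ ?_ ?_ ?_ ?_ ?_ (hmem f)
  · rintro _ ⟨j, rfl⟩
    by_cases h : j = Fin.last n
    · subst h; rw [hDn, hD1]
    · rw [hDj j h, map_zero]
  · simp
  · simp [hD1]
  · intro a b _ _ ha hb; simp [map_add, ha, hb]
  · intro a _ ha; simp [map_neg, ha]
  · intro a b _ _ ha hb
    rw [hL, map_add, hL, hL, ha, hb, hDs, hss]
    noncomm_ring
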